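/- Let μ₀ be a Borel probability measure on ℝ with mean 0 and variance 1 whose distribution function F₀ is continuous and strictly increasing with a density f₀ that is continuous and strictly positive at F₀⁻¹(α), let α∈(0,1) with VaR_α(μ₀) ≥ 0, and for 0<ε<1 let 𝓛_ε be the set of probability measures of the form (1−θ)μ₀ + θν with θ∈[0,ε] and ν any Borel probability measure on ℝ with mean 0 and variance 1. Then the local measure of model risk for VaR_α satisfies LM = lim_{ε→0} (sup_{μ∈𝓛_ε}VaR_α(μ) − VaR_α(μ₀)) / (sup_{μ∈𝓛_ε}VaR_α(μ) − inf_{μ∈𝓛_ε}VaR_α(μ)) = 1 − α·(1 + VaR_α(μ₀)²). -/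

import Mathlib

open MeasureTheory Set Filter

/-- The distribution function of a measure: `F_μ(x) = μ((-∞, x])`. -/
noncomputable def distFun (μ : Measure ℝ) (x : ℝ) : ℝ := (μ (Iic x)).toReal

/-- The lower quantile of order `α`: `q_α(μ) = inf {x : F_μ(x) ≥ α}`. -/
noncomputable def lowerQuantile (μ : Measure ℝ) (α : ℝ) : ℝ :=
  sInf {x : ℝ | α ≤ distFun μ x}

/-- The Value-at-Risk of order `α`: `VaR_α(μ) = -q_α(μ)`. -/
noncomputable def VaR (μ : Measure ℝ) (α : ℝ) : ℝ := - lowerQuantile μ α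

lemma distFun_nonneg (μ : Measure ℝ) (x : ℝ) : 0 ≤ distFun μ x := ENNReal.toReal_nonneg

lemma distFun_mono (μ : Measure ℝ) [IsFiniteMeasure μ] : Monotone (distFun μ) := by
  intro a b hab
  exact ENNReal.toReal_mono (measure_ne_top μ _) (measure_mono (Iic_subset_Iic.2 hab))

lemma distFun_le_one (μ : Measure ℝ) [IsProbabilityMeasure μ] (x : ℝ) : distFun μ x ≤ 1 := by
  rw [distFun, ← ENNReal.toReal_one]
  exact ENNReal.toReal_mono ENNReal.one_ne_top prob_le_one

lemma tendsto_distFun_atTop (μ : Measure ℝ) [IsProbabilityMeasure μ] :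
    Tendsto (distFun μ) atTop (nhds 1) := by
  have h := tendsto_measure_Iic_atTop (μ := μ)
  rw [measure_univ] at h
  have := (ENNReal.tendsto_toReal (a := 1) ENNReal.one_ne_top).comp h
  rw [ENNReal.toReal_one] at this
  exact this

lemma exists_distFun_lt (μ : Measure ℝ) [IsProbabilityMeasure μ] {α : ℝ} (hα : 0 < α) :
    ∃ x₀ : ℝ, distFun μ x₀ < α := by
  have hinter : (⋂ n : ℕ, Iic (-(n : ℝ))) = ∅ := by
    ext x
    simp only [mem_iInter, mem_Iic, mem_empty_iff_false, iff_false, not_forall]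
    obtain ⟨n, hn⟩ := exists_nat_gt (-x)
    exact ⟨n, by linarith⟩
  have h : Tendsto (fun n : ℕ => μ (Iic (-(n : ℝ)))) atTop (nhds 0) := by
    have := tendsto_measure_iInter_atTop (μ := μ) (s := fun n : ℕ => Iic (-(n : ℝ)))
      (fun n => (measurableSet_Iic).nullMeasurableSet)
      (fun i j hij => Iic_subset_Iic.2 (by exact_mod_cast neg_le_neg (by exact_mod_cast hij)))
      ⟨0, measure_ne_top μ _⟩
    rwa [hinter, measure_empty] at this
  have h2 : Tendsto (fun n : ℕ => distFun μ (-(n : ℝ))) atTop (nhds 0) := by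
    have := (ENNReal.tendsto_toReal (a := 0) (by simp)).comp h
    simpa [distFun, Function.comp_def] using this
  have := (h2.eventually (eventually_lt_nhds hα)).exists
  obtain ⟨n, hn⟩ := this
  exact ⟨-(n : ℝ), hn⟩

lemma quantile_set_nonempty (μ : Measure ℝ) [IsProbabilityMeasure μ] {α : ℝ} (hα : α < 1) :
    {x : ℝ | α ≤ distFun μ x}.Nonempty := by
  have := (tendsto_distFun_atTop μ).eventually (eventually_ge_nhds hα)
  obtain ⟨y, hy⟩ := this.exists
  exact ⟨y, hy⟩

lemma quantile_set_bddBelow (μ : Measure ℝ) [IsProbabilityMeasure μ] {α : ℝ} (hα : 0 < α) :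
    BddBelow {x : ℝ | α ≤ distFun μ x} := by
  obtain ⟨x₀, hx₀⟩ := exists_distFun_lt μ hα
  refine ⟨x₀, fun y hy => ?_⟩
  by_contra hxy
  push_neg at hxy
  exact absurd (le_trans hy (distFun_mono μ hxy.le)) (not_le.2 hx₀)

lemma lowerQuantile_le (μ : Measure ℝ) [IsProbabilityMeasure μ] {α y : ℝ} (hα : 0 < α)
    (h : α ≤ distFun μ y) : lowerQuantile μ α ≤ y :=
  csInf_le (quantile_set_bddBelow μ hα) h

lemma le_lowerQuantile (μ : Measure ℝ) [IsProbabilityMeasure μ] {α x : ℝ} (hα : α < 1)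
    (h : distFun μ x < α) : x ≤ lowerQuantile μ α := by
  refine le_csInf (quantile_set_nonempty μ hα) (fun y hy => ?_)
  by_contra hxy
  push_neg at hxy
  exact absurd (le_trans hy (distFun_mono μ hxy.le)) (not_le.2 h)

lemma distFun_lowerQuantile_eq (μ : Measure ℝ) [IsProbabilityMeasure μ] {α : ℝ}
    (hα : α ∈ Ioo (0:ℝ) 1) (hcont : Continuous (distFun μ)) :
    distFun μ (lowerQuantile μ α) = α := by
  have hclosed : IsClosed {x : ℝ | α ≤ distFun μ x} := isClosed_le continuous_const hcont
  have hmem := hclosed.csInf_mem (quantile_set_nonempty μ hα.2) (quantile_set_bddBelow μ hα.1)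
  refine le_antisymm ?_ hmem
  -- F(q) ≤ α : limit from the left
  have hlt : ∀ x < lowerQuantile μ α, distFun μ x < α := by
    intro x hx
    by_contra h
    push_neg at h
    exact absurd (csInf_le (quantile_set_bddBelow μ hα.1) h) (not_le.2 hx)
  have htendsto : Tendsto (distFun μ) (nhdsWithin (lowerQuantile μ α) (Iio (lowerQuantile μ α)))
      (nhds (distFun μ (lowerQuantile μ α))) :=
    (hcont.continuousAt).continuousWithinAt.tendsto
  exact le_of_tendsto htendsto (eventually_nhdsWithin_of_forall (fun x hx => (hlt x hx).le))

section Integrability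

lemma integrable_sq_of_integral_eq (ν : Measure ℝ) [IsProbabilityMeasure ν]
    (h2 : (∫ x, x ^ 2 ∂ν) = 1) : Integrable (fun x : ℝ => x ^ 2) ν := by
  by_contra h
  rw [integral_undef h] at h2
  norm_num at h2

lemma integrable_id_of_integral_sq (ν : Measure ℝ) [IsProbabilityMeasure ν]
    (h2 : (∫ x, x ^ 2 ∂ν) = 1) : Integrable (fun x : ℝ => x) ν := by
  have hsq := integrable_sq_of_integral_eq ν h2
  have hbound : Integrable (fun x : ℝ => 1 + x ^ 2) ν := (integrable_const 1).add hsq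
  refine hbound.mono (measurable_id.aestronglyMeasurable) (Filter.Eventually.of_forall fun x => ?_)
  simp only [Real.norm_eq_abs]
  rw [abs_of_nonneg (by positivity : (0:ℝ) ≤ 1 + x ^ 2)]
  nlinarith [abs_nonneg x, sq_abs x, sq_nonneg (|x| - 1)]

/-- Cantelli's inequality at a negative point. -/
lemma cantelli (ν : Measure ℝ) [IsProbabilityMeasure ν]
    (h1 : (∫ x, x ∂ν) = 0) (h2 : (∫ x, x ^ 2 ∂ν) = 1) {t : ℝ} (ht : t < 0) :
    distFun ν t ≤ 1 / (1 + t ^ 2) := by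
  set c : ℝ := -1 / t with hc
  have hc0 : 0 < c := by
    rw [hc, div_pos_iff]; right; constructor <;> linarith
  have hct : 0 < c - t := by linarith
  have hsq := integrable_sq_of_integral_eq ν h2
  have hid := integrable_id_of_integral_sq ν h2
  have hint : Integrable (fun x : ℝ => (c - x) ^ 2) ν := by
    have : (fun x : ℝ => (c - x) ^ 2) = fun x : ℝ => c ^ 2 - (2 * c) * x + x ^ 2 := by
      funext x; ring
    rw [this]
    exact (((integrable_const (c ^ 2)).sub (hid.const_mul (2 * c))).add hsq)
  have hval : (∫ x, (c - x) ^ 2 ∂ν) = c ^ 2 + 1 := by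
    have heq1 : (fun x : ℝ => (c - x) ^ 2) = fun x : ℝ => c ^ 2 - 2 * c * x + x ^ 2 := by
      funext x; ring
    have hlin : Integrable (fun x : ℝ => c ^ 2 - 2 * c * x) ν :=
      (integrable_const (c ^ 2)).sub (hid.const_mul (2 * c))
    rw [heq1, integral_add hlin hsq,
      integral_sub (integrable_const (c ^ 2)) (hid.const_mul (2 * c)),
      integral_const_mul, h1, h2, integral_const]
    simp
  have hset : (c - t) ^ 2 * (ν (Iic t)).toReal ≤ ∫ x in Iic t, (c - x) ^ 2 ∂ν := by
    refine setIntegral_ge_of_const_le_real measurableSet_Iic (measure_ne_top ν _) (fun x hx => ?_)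
      hint.integrableOn
    have hx' : x ≤ t := hx
    nlinarith [hct]
  have hle : (∫ x in Iic t, (c - x) ^ 2 ∂ν) ≤ c ^ 2 + 1 := by
    rw [← hval]
    exact setIntegral_le_integral hint (Filter.Eventually.of_forall fun x => sq_nonneg _)
  have h3 : (c - t) ^ 2 * (ν (Iic t)).toReal ≤ c ^ 2 + 1 := le_trans hset hle
  have hkey : (ν (Iic t)).toReal ≤ (c ^ 2 + 1) / (c - t) ^ 2 := by
    rw [le_div_iff₀ (by positivity)]
    linarith [h3]
  have heq : (c ^ 2 + 1) / (c - t) ^ 2 = 1 / (1 + t ^ 2) := by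
    have ht' : t ≠ 0 := ne_of_lt ht
    rw [div_eq_div_iff (by positivity) (by positivity), hc]
    field_simp
    ring
  rw [heq] at hkey
  exact hkey

end Integrability

section TwoPoint

lemma integrable_dirac'' (f : ℝ → ℝ) (a : ℝ) : Integrable f (Measure.dirac a) :=
  (integrable_const (f a)).congr (MeasureTheory.ae_eq_dirac f).symm

lemma exists_twoPoint {a b : ℝ} (ha : a < 0) (hb : 0 < b) (hab : a * b = -1) :
    ∃ ν : Measure ℝ, IsProbabilityMeasure ν ∧ (∫ x, x ∂ν) = 0 ∧ (∫ x, x ^ 2 ∂ν) = 1 ∧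
      (∀ x, x < a → distFun ν x = 0) ∧
      (∀ x, a ≤ x → x < b → distFun ν x = b / (b - a)) := by
  have hba : 0 < b - a := by linarith
  set w : ℝ := b / (b - a) with hw
  have hw0 : 0 < w := by positivity
  have hw1 : w < 1 := by
    rw [hw, div_lt_one hba]; linarith
  refine ⟨ENNReal.ofReal w • Measure.dirac a + ENNReal.ofReal (1 - w) • Measure.dirac b,
    ?_, ?_, ?_, ?_, ?_⟩
  · constructor
    simp only [Measure.add_apply, Measure.smul_apply, smul_eq_mul, measure_univ, mul_one]
    rw [← ENNReal.ofReal_add (by linarith) (by linarith)]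
    norm_num
  · rw [integral_add_measure, integral_smul_measure, integral_smul_measure,
      integral_dirac, integral_dirac, ENNReal.toReal_ofReal hw0.le,
      ENNReal.toReal_ofReal (by linarith : (0:ℝ) ≤ 1 - w)]
    · simp only [smul_eq_mul, hw]
      field_simp
      ring
    · exact (integrable_dirac'' _ _).smul_measure ENNReal.ofReal_ne_top
    · exact (integrable_dirac'' _ _).smul_measure ENNReal.ofReal_ne_top
  · rw [integral_add_measure, integral_smul_measure, integral_smul_measure,
      integral_dirac, integral_dirac, ENNReal.toReal_ofReal hw0.le,
      ENNReal.toReal_ofReal (by linarith : (0:ℝ) ≤ 1 - w)]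
    · simp only [smul_eq_mul, hw]
      field_simp
      nlinarith [hab]
    · exact (integrable_dirac'' _ _).smul_measure ENNReal.ofReal_ne_top
    · exact (integrable_dirac'' _ _).smul_measure ENNReal.ofReal_ne_top
  · intro x hx
    have h1 : Measure.dirac a (Iic x) = 0 := by
      rw [Measure.dirac_apply' _ measurableSet_Iic]
      simp [indicator_apply, not_le.2 hx]
    have h2 : Measure.dirac b (Iic x) = 0 := by
      rw [Measure.dirac_apply' _ measurableSet_Iic]
      simp [indicator_apply, not_le.2 (by linarith : x < b)]
    simp [distFun, Measure.add_apply, Measure.smul_apply, h1, h2]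
  · intro x hax hxb
    have h1 : Measure.dirac a (Iic x) = 1 := by
      rw [Measure.dirac_apply' _ measurableSet_Iic]
      simp [indicator_apply, hax]
    have h2 : Measure.dirac b (Iic x) = 0 := by
      rw [Measure.dirac_apply' _ measurableSet_Iic]
      simp [indicator_apply, not_le.2 hxb]
    simp [distFun, Measure.add_apply, Measure.smul_apply, h1, h2,
      ENNReal.toReal_ofReal hw0.le, hw, div_nonneg hb.le hba.le]

end TwoPoint

section Mixture

lemma mix_isProbability (μ₀ ν : Measure ℝ) [IsProbabilityMeasure μ₀] [IsProbabilityMeasure ν]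
    {θ : ℝ} (h0 : 0 ≤ θ) (h1 : θ ≤ 1) :
    IsProbabilityMeasure (ENNReal.ofReal (1 - θ) • μ₀ + ENNReal.ofReal θ • ν) := by
  constructor
  simp only [Measure.add_apply, Measure.smul_apply, smul_eq_mul, measure_univ, mul_one]
  rw [← ENNReal.ofReal_add (by linarith) h0]
  norm_num

lemma distFun_mix (μ₀ ν : Measure ℝ) [IsProbabilityMeasure μ₀] [IsProbabilityMeasure ν]
    {θ : ℝ} (h0 : 0 ≤ θ) (h1 : θ ≤ 1) (x : ℝ) :
    distFun (ENNReal.ofReal (1 - θ) • μ₀ + ENNReal.ofReal θ • ν) x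
      = (1 - θ) * distFun μ₀ x + θ * distFun ν x := by
  simp only [distFun, Measure.add_apply, Measure.smul_apply, smul_eq_mul]
  rw [ENNReal.toReal_add (by finiteness) (by finiteness), ENNReal.toReal_mul,
    ENNReal.toReal_mul, ENNReal.toReal_ofReal (by linarith), ENNReal.toReal_ofReal h0]

end Mixture

lemma aux_slope (F : ℝ → ℝ) {q χ : ℝ} (hF : HasDerivAt F χ q) (c : ℝ) :
    Tendsto (fun ε : ℝ => (F (q + c * ε) - F q) / ε) (nhdsWithin 0 (Ioi 0)) (nhds (c * χ)) := by
  have hinner : HasDerivAt (fun ε : ℝ => q + c * ε) c 0 := by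
    simpa using ((hasDerivAt_id (0:ℝ)).const_mul c).const_add q
  have hF' : HasDerivAt F χ ((fun ε : ℝ => q + c * ε) 0) := by simpa using hF
  have hg : HasDerivAt (fun ε : ℝ => F (q + c * ε)) (χ * c) 0 := by
    exact HasDerivAt.comp 0 hF' hinner
  have hslope := hasDerivAt_iff_tendsto_slope.mp hg
  have hmono : nhdsWithin (0:ℝ) (Ioi 0) ≤ nhdsWithin (0:ℝ) {(0:ℝ)}ᶜ :=
    nhdsWithin_mono 0 (fun x hx => by simp [(mem_Ioi.mp hx).ne'])
  have heq : ∀ ε : ℝ, slope (fun ε : ℝ => F (q + c * ε)) 0 ε = (F (q + c * ε) - F q) / ε := by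
    intro ε
    rw [slope_def_field]
    norm_num
  rw [mul_comm c χ]
  exact Tendsto.congr heq (hslope.mono_left hmono)

lemma tendsto_sqrt_zero : Tendsto Real.sqrt (nhdsWithin 0 (Ioi 0)) (nhds 0) := by
  have h := (Real.continuous_sqrt.tendsto 0).mono_left
    (nhdsWithin_le_nhds (s := Ioi (0:ℝ)))
  simpa using h


set_option maxHeartbeats 2000000 in
/-- Let `μ₀` be a standard probability measure (mean 0, variance 1) with
continuous, strictly increasing distribution function `F₀` having a density
`f₀` continuous and positive at `F₀⁻¹(α)`, with `VaR_α(μ₀) ≥ 0`, and for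
`0 < ε < 1` let `𝓛_ε` be the set of mixtures `(1−θ)μ₀ + θν`, `θ ∈ [0,ε]`,
`ν` standard. Then the local measure of model risk for `VaR_α` equals
`1 − α(1 + VaR_α(μ₀)²)`. -/
theorem local_measure_mixtures (μ₀ : Measure ℝ) [IsProbabilityMeasure μ₀]
    (hmean : (∫ x, x ∂μ₀) = 0) (hvar : (∫ x, x ^ 2 ∂μ₀) = 1)
    (hcont : Continuous (distFun μ₀)) (hmono : StrictMono (distFun μ₀))
    (α : ℝ) (hα : α ∈ Ioo (0 : ℝ) 1)
    (f₀ : ℝ → ℝ) (hderiv : ∀ x, HasDerivAt (distFun μ₀) (f₀ x) x)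
    (hfc : ContinuousAt f₀ (lowerQuantile μ₀ α))
    (hfpos : 0 < f₀ (lowerQuantile μ₀ α))
    (hVaR : 0 ≤ VaR μ₀ α)
    (Lset : ℝ → Set (Measure ℝ))
    (hLset : ∀ ε ∈ Ioo (0 : ℝ) 1, Lset ε =
      {μ | ∃ θ ∈ Icc (0 : ℝ) ε, ∃ ν : Measure ℝ,
        (IsProbabilityMeasure ν ∧ (∫ x, x ∂ν) = 0 ∧ (∫ x, x ^ 2 ∂ν) = 1) ∧
        μ = ENNReal.ofReal (1 - θ) • μ₀ + ENNReal.ofReal θ • ν}) :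
    Tendsto (fun ε : ℝ =>
        (sSup ((fun μ : Measure ℝ => VaR μ α) '' Lset ε) - VaR μ₀ α) /
        (sSup ((fun μ : Measure ℝ => VaR μ α) '' Lset ε) -
          sInf ((fun μ : Measure ℝ => VaR μ α) '' Lset ε)))
      (nhdsWithin 0 (Ioi 0)) (nhds (1 - α * (1 + (VaR μ₀ α) ^ 2))) := by
  obtain ⟨hα0, hα1⟩ := hα
  set q₀ := lowerQuantile μ₀ α with hq₀def
  have hVq : VaR μ₀ α = -q₀ := rfl
  have hq0le : q₀ ≤ 0 := by rw [hVq] at hVaR; linarith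
  have hFq₀ : distFun μ₀ q₀ = α := distFun_lowerQuantile_eq μ₀ ⟨hα0, hα1⟩ hcont
  set χ := f₀ q₀ with hχdef
  have hχ : 0 < χ := hfpos
  have h1q : (0:ℝ) < 1 + q₀ ^ 2 := by positivity
  set K : ℝ := 1 / (1 + q₀ ^ 2) with hKdef
  have hK0 : 0 < K := by positivity
  have hαK : α ≤ K := by
    rcases lt_or_eq_of_le hq0le with h | h
    · have := cantelli μ₀ hmean hvar h
      rwa [hFq₀] at this
    · rw [hKdef, h]
      norm_num
      exact hα1.le
  set A : ℝ := (K - α) / χ with hAdef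
  set B : ℝ := α / χ with hBdef
  have hA0 : 0 ≤ A := div_nonneg (by linarith) hχ.le
  have hB0 : 0 < B := div_pos hα0 hχ
  set Φ : ℝ → Set ℝ := fun ε => (fun μ : Measure ℝ => VaR μ α) '' Lset ε with hΦdef
  set V : ℝ := VaR μ₀ α with hVdef
  -- membership of the base VaR
  have hmem₀ : ∀ ε ∈ Ioo (0:ℝ) 1, V ∈ Φ ε := by
    intro ε hε
    refine ⟨μ₀, ?_, rfl⟩
    rw [hLset ε hε]
    refine ⟨0, ⟨le_refl 0, hε.1.le⟩, μ₀, ⟨‹_›, hmean, hvar⟩, ?_⟩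
    simp
  -- universal lower bound on VaR values
  have hIlow : ∀ ε ∈ Ioo (0:ℝ) 1, ∀ y : ℝ, α ≤ (1 - ε) * distFun μ₀ y →
      ∀ v ∈ Φ ε, -y ≤ v := by
    intro ε hε y hy v hv
    obtain ⟨μ, hμ, rfl⟩ := hv
    rw [hLset ε hε] at hμ
    obtain ⟨θ, hθ, ν, ⟨hνP, hνm, hνv⟩, rfl⟩ := hμ
    haveI := hνP
    haveI := mix_isProbability μ₀ ν hθ.1 (hθ.2.trans hε.2.le)
    have hd := distFun_mix μ₀ ν hθ.1 (hθ.2.trans hε.2.le) y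
    have hge : α ≤ distFun (ENNReal.ofReal (1 - θ) • μ₀ + ENNReal.ofReal θ • ν) y := by
      rw [hd]
      have h1 : (1-ε) * distFun μ₀ y ≤ (1-θ) * distFun μ₀ y :=
        mul_le_mul_of_nonneg_right (by linarith [hθ.2]) (distFun_nonneg μ₀ y)
      have h2 : 0 ≤ θ * distFun ν y := mul_nonneg hθ.1 (distFun_nonneg ν y)
      linarith
    have := lowerQuantile_le _ hα0 hge
    simp only [VaR]
    linarith
  -- universal upper bound on VaR values (Cantelli)
  have hSupB : ∀ ε ∈ Ioo (0:ℝ) 1, ∀ x : ℝ, x < 0 →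
      (1 - ε) * distFun μ₀ x + ε * (1/(1+x^2)) < α →
      ∀ v ∈ Φ ε, v ≤ -x := by
    intro ε hε x hx hlt v hv
    obtain ⟨μ, hμ, rfl⟩ := hv
    rw [hLset ε hε] at hμ
    obtain ⟨θ, hθ, ν, ⟨hνP, hνm, hνv⟩, rfl⟩ := hμ
    haveI := hνP
    haveI := mix_isProbability μ₀ ν hθ.1 (hθ.2.trans hε.2.le)
    have hd := distFun_mix μ₀ ν hθ.1 (hθ.2.trans hε.2.le) x
    have hcν := cantelli ν hνm hνv hx
    have hc₀ := cantelli μ₀ hmean hvar hx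
    have hθε : θ ≤ ε := hθ.2
    have hlt' : distFun (ENNReal.ofReal (1 - θ) • μ₀ + ENNReal.ofReal θ • ν) x < α := by
      rw [hd]
      have h2 : θ * distFun ν x ≤ θ * (1/(1+x^2)) :=
        mul_le_mul_of_nonneg_left hcν hθ.1
      nlinarith [hθ.1, distFun_nonneg μ₀ x]
    have := le_lowerQuantile _ hα1 hlt'
    simp only [VaR]
    linarith
  -- construction for the sup side
  have hSlow : ∀ ε ∈ Ioo (0:ℝ) 1, ∀ x : ℝ, x < 0 →
      α ≤ (1 - ε) * distFun μ₀ x + ε * (1/(1+x^2)) →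
      ∃ v ∈ Φ ε, -x ≤ v := by
    intro ε hε x hx hge
    have hx0 : x ≠ 0 := ne_of_lt hx
    have hbpos : (0:ℝ) < -1/x := by
      rw [div_pos_iff]; right; constructor <;> linarith
    obtain ⟨ν, hνP, hνm, hνv, _, hνval⟩ :=
      exists_twoPoint (a := x) (b := -1/x) hx hbpos (by field_simp)
    haveI := hνP
    have hxb : x < -1/x := lt_trans hx hbpos
    have hFνx : distFun ν x = 1/(1+x^2) := by
      rw [hνval x (le_refl x) hxb]
      rw [div_eq_div_iff (by linarith) (by positivity)]
      field_simp
      ring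
    haveI := mix_isProbability μ₀ ν hε.1.le hε.2.le
    have hd := distFun_mix μ₀ ν hε.1.le hε.2.le x
    refine ⟨VaR (ENNReal.ofReal (1 - ε) • μ₀ + ENNReal.ofReal ε • ν) α, ⟨_, ?_, rfl⟩, ?_⟩
    · rw [hLset ε hε]
      exact ⟨ε, ⟨hε.1.le, le_refl ε⟩, ν, ⟨hνP, hνm, hνv⟩, rfl⟩
    · have hge' : α ≤ distFun (ENNReal.ofReal (1 - ε) • μ₀ + ENNReal.ofReal ε • ν) x := by
        rw [hd, hFνx]; exact hge
      have := lowerQuantile_le _ hα0 hge'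
      simp only [VaR]
      linarith
  -- construction for the inf side
  have hIup : ∀ ε ∈ Ioo (0:ℝ) 1, ∀ y : ℝ, y ≤ Real.sqrt ε →
      (1 - ε) * distFun μ₀ y + ε * (ε/(1+ε)) ≤ α →
      ∃ v ∈ Φ ε, v ≤ -y := by
    intro ε hε y hysq hle
    have hsq : (0:ℝ) < Real.sqrt ε := Real.sqrt_pos.2 hε.1
    have hsqsq : Real.sqrt ε * Real.sqrt ε = ε := Real.mul_self_sqrt hε.1.le
    have hapos : (-1/Real.sqrt ε) < 0 := by
      rw [div_neg_iff]; right; constructor <;> linarith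
    obtain ⟨ν, hνP, hνm, hνv, hνzero, hνval⟩ :=
      exists_twoPoint (a := -1/Real.sqrt ε) (b := Real.sqrt ε) hapos hsq (by field_simp)
    haveI := hνP
    have hden : (0:ℝ) < Real.sqrt ε - (-1/Real.sqrt ε) := by linarith
    have hwval : Real.sqrt ε / (Real.sqrt ε - (-1/Real.sqrt ε)) = ε/(1+ε) := by
      rw [div_eq_div_iff hden.ne' (by linarith [hε.1] : (0:ℝ) < 1 + ε).ne']
      field_simp
      linear_combination hsqsq
    haveI := mix_isProbability μ₀ ν hε.1.le hε.2.le
    refine ⟨VaR (ENNReal.ofReal (1 - ε) • μ₀ + ENNReal.ofReal ε • ν) α, ⟨_, ?_, rfl⟩, ?_⟩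
    · rw [hLset ε hε]
      exact ⟨ε, ⟨hε.1.le, le_refl ε⟩, ν, ⟨hνP, hνm, hνv⟩, rfl⟩
    · have hkey : ∀ x : ℝ, x < y →
          distFun (ENNReal.ofReal (1 - ε) • μ₀ + ENNReal.ofReal ε • ν) x < α := by
        intro x hxy
        have hd := distFun_mix μ₀ ν hε.1.le hε.2.le x
        have hFν : distFun ν x ≤ ε/(1+ε) := by
          rcases lt_or_ge x (-1/Real.sqrt ε) with h | h
          · rw [hνzero x h]
            exact div_nonneg hε.1.le (by linarith [hε.1])
          · rw [hνval x h (lt_of_lt_of_le hxy hysq), hwval]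
        have hmono' : distFun μ₀ x < distFun μ₀ y := hmono hxy
        rw [hd]
        nlinarith [hε.1, hε.2, distFun_nonneg ν x]
      have hquant : y ≤ lowerQuantile (ENNReal.ofReal (1 - ε) • μ₀ + ENNReal.ofReal ε • ν) α := by
        by_contra h
        push_neg at h
        obtain ⟨x, hx1, hx2⟩ := exists_between h
        exact absurd (le_lowerQuantile _ hα1 (hkey x hx2)) (not_le.2 hx1)
      simp only [VaR]
      linarith
  -- filter preliminaries
  have Epos : ∀ᶠ ε in nhdsWithin (0:ℝ) (Ioi 0), 0 < ε :=
    eventually_mem_nhdsWithin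
  have Eoo : ∀ᶠ ε in nhdsWithin (0:ℝ) (Ioi 0), ε ∈ Ioo (0:ℝ) 1 :=
    Ioo_mem_nhdsGT_of_mem ⟨le_refl 0, one_pos⟩
  have taff : ∀ c : ℝ, Tendsto (fun ε : ℝ => q₀ + c * ε) (nhdsWithin 0 (Ioi 0)) (nhds q₀) := by
    intro c
    have hco : Continuous (fun ε : ℝ => q₀ + c * ε) :=
      continuous_const.add (continuous_const.mul continuous_id)
    have h := (hco.tendsto 0).mono_left (nhdsWithin_le_nhds (s := Ioi (0:ℝ)))
    simpa using h
  have t2 : ∀ c : ℝ, Tendsto (fun ε : ℝ => distFun μ₀ (q₀ + c * ε))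
      (nhdsWithin 0 (Ioi 0)) (nhds α) := by
    intro c
    have h := (hcont.tendsto q₀).comp (taff c)
    rw [hFq₀] at h
    exact h
  have t3 : ∀ c : ℝ, Tendsto (fun ε : ℝ => 1/(1+(q₀ + c*ε)^2))
      (nhdsWithin 0 (Ioi 0)) (nhds K) := by
    intro c
    have hcK : Continuous (fun u : ℝ => 1/(1+u^2)) :=
      continuous_const.div (continuous_const.add (continuous_pow 2)) (fun u => by positivity)
    have h := (hcK.tendsto q₀).comp (taff c)
    exact h
  have t1 : ∀ c : ℝ, Tendsto (fun ε : ℝ => (distFun μ₀ (q₀ + c*ε) - α)/ε)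
      (nhdsWithin 0 (Ioi 0)) (nhds (c * χ)) := by
    intro c
    have h := aux_slope (distFun μ₀) (hderiv q₀) c
    rwa [hFq₀] at h
  have key1 : ∀ u k ε : ℝ, ε ≠ 0 → (u - α)/ε - u + k = ((1-ε)*u + ε*k - α)/ε := by
    intro u k ε hεne
    field_simp
    ring
  have key2 : ∀ u ε : ℝ, ε ≠ 0 → (u - α)/ε - u = ((1-ε)*u - α)/ε := by
    intro u ε hεne
    field_simp
    ring
  have key3 : ∀ u w ε : ℝ, ε ≠ 0 → ((1-ε)*u - α)/ε + w = ((1-ε)*u + ε*w - α)/ε := by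
    intro u w ε hεne
    field_simp
    ring
  have hT1 : ∀ c : ℝ, Tendsto (fun ε : ℝ =>
      ((1-ε) * distFun μ₀ (q₀ + c*ε) + ε * (1/(1+(q₀ + c*ε)^2)) - α)/ε)
      (nhdsWithin 0 (Ioi 0)) (nhds (c*χ - α + K)) := by
    intro c
    have comb := ((t1 c).sub (t2 c)).add (t3 c)
    refine Tendsto.congr' ?_ comb
    filter_upwards [Epos] with ε hε
    exact key1 _ _ ε (ne_of_gt hε)
  have hT2 : ∀ c : ℝ, Tendsto (fun ε : ℝ => ((1-ε) * distFun μ₀ (q₀ + c*ε) - α)/ε)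
      (nhdsWithin 0 (Ioi 0)) (nhds (c*χ - α)) := by
    intro c
    have comb := (t1 c).sub (t2 c)
    refine Tendsto.congr' ?_ comb
    filter_upwards [Epos] with ε hε
    exact key2 _ ε (ne_of_gt hε)
  have t4 : Tendsto (fun ε : ℝ => ε/(1+ε)) (nhdsWithin (0:ℝ) (Ioi 0)) (nhds 0) := by
    have hc : ContinuousAt (fun ε : ℝ => ε/(1+ε)) 0 :=
      ContinuousAt.div continuousAt_id (continuous_const.add continuous_id).continuousAt
        (by norm_num)
    have h := hc.tendsto.mono_left (nhdsWithin_le_nhds (s := Ioi (0:ℝ)))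
    simpa using h
  have hT3 : ∀ c : ℝ, Tendsto (fun ε : ℝ =>
      ((1-ε) * distFun μ₀ (q₀ + c*ε) + ε * (ε/(1+ε)) - α)/ε)
      (nhdsWithin 0 (Ioi 0)) (nhds (c*χ - α)) := by
    intro c
    have comb := (hT2 c).add t4
    rw [add_zero] at comb
    refine Tendsto.congr' ?_ comb
    filter_upwards [Epos] with ε hε
    exact key3 _ _ ε (ne_of_gt hε)
  -- eventual upper bound over the whole class
  have Eub : ∀ c' : ℝ, 0 < c' → K - α < c'*χ →
      ∀ᶠ ε in nhdsWithin (0:ℝ) (Ioi 0), ∀ v ∈ Φ ε, v ≤ V + c'*ε := by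
    intro c' hc'0 hc'
    have hlim : (-c')*χ - α + K < 0 := by linarith
    filter_upwards [Eoo, (hT1 (-c')).eventually (eventually_lt_nhds hlim)] with ε hε h2 v hv
    have hx : q₀ + (-c') * ε < 0 := by nlinarith [hε.1, hq0le]
    have h3 : ((1-ε) * distFun μ₀ (q₀ + (-c')*ε) + ε * (1/(1+(q₀ + (-c')*ε)^2)) - α) < 0 := by
      have := (div_lt_iff₀ hε.1).mp h2
      linarith
    have h4 := hSupB ε hε (q₀ + (-c')*ε) hx (by linarith) v hv
    have : -(q₀ + (-c')*ε) = V + c'*ε := by rw [hVq]; ring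
    linarith [h4, this.symm ▸ h4]
  have Elb : ∀ c'' : ℝ, α < c''*χ →
      ∀ᶠ ε in nhdsWithin (0:ℝ) (Ioi 0), ∀ v ∈ Φ ε, V - c''*ε ≤ v := by
    intro c'' hc''
    have hlim : (0:ℝ) < c''*χ - α := by linarith
    filter_upwards [Eoo, (hT2 c'').eventually (eventually_gt_nhds hlim)] with ε hε h2 v hv
    have h3 : α ≤ (1-ε) * distFun μ₀ (q₀ + c''*ε) := by
      have := (lt_div_iff₀ hε.1).mp h2
      linarith
    have h4 := hIlow ε hε (q₀ + c''*ε) h3 v hv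
    have heq : -(q₀ + c''*ε) = V - c''*ε := by rw [hVq]; ring
    linarith [heq ▸ h4]
  have ESl : ∀ c : ℝ, 0 < c → c*χ < K - α →
      ∀ᶠ ε in nhdsWithin (0:ℝ) (Ioi 0), ∃ v ∈ Φ ε, V + c*ε ≤ v := by
    intro c hc0 hc
    have hlim : (0:ℝ) < (-c)*χ - α + K := by linarith
    filter_upwards [Eoo, (hT1 (-c)).eventually (eventually_gt_nhds hlim)] with ε hε h2
    have hx : q₀ + (-c) * ε < 0 := by nlinarith [hε.1, hq0le]
    have h3 : α ≤ (1-ε) * distFun μ₀ (q₀ + (-c)*ε) + ε * (1/(1+(q₀ + (-c)*ε)^2)) := by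
      have := (lt_div_iff₀ hε.1).mp h2
      linarith
    obtain ⟨v, hv, hvge⟩ := hSlow ε hε (q₀ + (-c)*ε) hx h3
    refine ⟨v, hv, ?_⟩
    have heq : -(q₀ + (-c)*ε) = V + c*ε := by rw [hVq]; ring
    linarith [heq ▸ hvge]
  have EIu : ∀ c : ℝ, 0 < c → c*χ < α →
      ∀ᶠ ε in nhdsWithin (0:ℝ) (Ioi 0), ∃ v ∈ Φ ε, v ≤ V - c*ε := by
    intro c hc0 hc
    have hlim : c*χ - α < 0 := by linarith
    have Esq : ∀ᶠ ε in nhdsWithin (0:ℝ) (Ioi 0), q₀ + c*ε ≤ Real.sqrt ε := by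
      filter_upwards [Epos,
        tendsto_sqrt_zero.eventually (eventually_lt_nhds (by positivity : (0:ℝ) < 1/c))]
        with ε hε hsq
      have hss : Real.sqrt ε * Real.sqrt ε = ε := Real.mul_self_sqrt hε.le
      have hsqpos : 0 < Real.sqrt ε := Real.sqrt_pos.2 hε
      have h5 : c * Real.sqrt ε < 1 := by
        rw [lt_div_iff₀ hc0] at hsq
        linarith
      nlinarith [hq0le, hss, hsqpos]
    filter_upwards [Eoo, (hT3 c).eventually (eventually_lt_nhds hlim), Esq] with ε hε h2 hsq
    have h3 : (1-ε) * distFun μ₀ (q₀ + c*ε) + ε * (ε/(1+ε)) ≤ α := by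
      have := (div_lt_iff₀ hε.1).mp h2
      linarith
    obtain ⟨v, hv, hvle⟩ := hIup ε hε (q₀ + c*ε) hsq h3
    refine ⟨v, hv, ?_⟩
    have heq : -(q₀ + c*ε) = V - c*ε := by rw [hVq]; ring
    linarith [heq ▸ hvle]
  have hAχ : A*χ = K - α := div_mul_cancel₀ _ (ne_of_gt hχ)
  have hBχ : B*χ = α := div_mul_cancel₀ _ (ne_of_gt hχ)
  have EbddA := Eub (A+1) (by linarith) (by nlinarith [hχ])
  have EbddB := Elb (B+1) (by nlinarith [hχ])
  -- tendsto of the normalized sup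
  have hgS : Tendsto (fun ε : ℝ => (sSup (Φ ε) - V)/ε) (nhdsWithin 0 (Ioi 0)) (nhds A) := by
    rw [tendsto_order]
    constructor
    · intro a ha
      rcases lt_or_ge a 0 with ha0 | ha0
      · filter_upwards [Eoo, EbddA] with ε hε hub
        have hbdd : BddAbove (Φ ε) := ⟨V + (A+1)*ε, fun v hv => hub v hv⟩
        have hS : V ≤ sSup (Φ ε) := le_csSup hbdd (hmem₀ ε hε)
        have h6 : 0 ≤ (sSup (Φ ε) - V)/ε := div_nonneg (by linarith) hε.1.le
        linarith
      · have hA' : 0 < A := lt_of_le_of_lt ha0 ha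
        have hc0 : 0 < (a + A)/2 := by linarith
        have hca : a < (a + A)/2 := by linarith
        have hcK : ((a + A)/2)*χ < K - α := by nlinarith [hχ]
        filter_upwards [Eoo, EbddA, ESl ((a + A)/2) hc0 hcK] with ε hε hub hex
        obtain ⟨v, hv, hvge⟩ := hex
        have hbdd : BddAbove (Φ ε) := ⟨V + (A+1)*ε, fun u hu => hub u hu⟩
        have h5 : V + ((a + A)/2)*ε ≤ sSup (Φ ε) := le_trans hvge (le_csSup hbdd hv)
        have h6 : (a + A)/2 ≤ (sSup (Φ ε) - V)/ε := (le_div_iff₀ hε.1).2 (by linarith)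
        linarith
    · intro b hb
      have hc'0 : 0 < (A + b)/2 := by linarith
      have hc'b : (A + b)/2 < b := by linarith
      have hc'K : K - α < ((A + b)/2)*χ := by nlinarith [hχ]
      filter_upwards [Eoo, Eub ((A + b)/2) hc'0 hc'K] with ε hε hub
      have hne : (Φ ε).Nonempty := ⟨V, hmem₀ ε hε⟩
      have h5 : sSup (Φ ε) ≤ V + ((A + b)/2)*ε := csSup_le hne hub
      have h6 : (sSup (Φ ε) - V)/ε ≤ (A + b)/2 := (div_le_iff₀ hε.1).2 (by linarith)
      linarith
  -- tendsto of the normalized inf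
  have hgI : Tendsto (fun ε : ℝ => (V - sInf (Φ ε))/ε) (nhdsWithin 0 (Ioi 0)) (nhds B) := by
    rw [tendsto_order]
    constructor
    · intro a ha
      have hc0 : 0 < (max a 0 + B)/2 := by
        have := le_max_right a 0
        linarith
      have hca : a < (max a 0 + B)/2 := by
        have h7 := le_max_left a 0
        have h8 : max a 0 < B := max_lt ha hB0
        linarith
      have hcB : (max a 0 + B)/2 < B := by
        have h8 : max a 0 < B := max_lt ha hB0
        linarith
      have hcα : ((max a 0 + B)/2)*χ < α := by nlinarith [hχ]
      filter_upwards [Eoo, EbddB, EIu ((max a 0 + B)/2) hc0 hcα] with ε hε hlb hex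
      obtain ⟨v, hv, hvle⟩ := hex
      have hbdd : BddBelow (Φ ε) := ⟨V - (B+1)*ε, fun u hu => hlb u hu⟩
      have h5 : sInf (Φ ε) ≤ V - ((max a 0 + B)/2)*ε := le_trans (csInf_le hbdd hv) hvle
      have h6 : (max a 0 + B)/2 ≤ (V - sInf (Φ ε))/ε := (le_div_iff₀ hε.1).2 (by linarith)
      linarith
    · intro b hb
      have hc''α : α < ((B + b)/2)*χ := by nlinarith [hχ]
      filter_upwards [Eoo, Elb ((B + b)/2) hc''α] with ε hε hlb
      have hne : (Φ ε).Nonempty := ⟨V, hmem₀ ε hε⟩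
      have h5 : V - ((B + b)/2)*ε ≤ sInf (Φ ε) := le_csInf hne hlb
      have h6 : (V - sInf (Φ ε))/ε ≤ (B + b)/2 := (div_le_iff₀ hε.1).2 (by linarith)
      linarith
  -- combine
  have hABpos : 0 < A + B := by linarith
  have hdiv := hgS.div (hgS.add hgI) (ne_of_gt hABpos)
  have hfin : 1 - α * (1 + V^2) = A/(A+B) := by
    have hVsq : V^2 = q₀^2 := by rw [hVq]; ring
    have hsumAB : A + B = K / χ := by rw [hAdef, hBdef]; ring
    rw [hVsq, hsumAB, hAdef, div_div_div_cancel_right₀ (ne_of_gt hχ),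
      eq_div_iff (ne_of_gt hK0), hKdef]
    field_simp
  rw [hfin]
  refine Tendsto.congr' ?_ hdiv
  filter_upwards [Epos] with ε hε
  have hεne : ε ≠ 0 := ne_of_gt hε
  simp only [Pi.div_apply]
  have hsum : (sSup (Φ ε) - V)/ε + (V - sInf (Φ ε))/ε = (sSup (Φ ε) - sInf (Φ ε))/ε := by
    rw [← add_div]
    ring_nf
  rw [hsum, div_div_div_cancel_right₀]
  exact hεne
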